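/- arXiv:1009.3863 — 3 statements merged into one kernel-verified Lean document; each statement's English description precedes it below -/
import Mathlib

section
/- Let $H_1, H_2$ be independent exponential random variables with distinct positive means $P_1 \neq P_2$, let $H_3$ be exponential with mean $P_3 > 0$ independent of both, and let $\gamma > 0$. Then $\mathbb{P}(H_1 + H_2 > \gamma H_3) = \frac{P_1}{P_1 - P_2} \cdot \frac{P_1}{P_1 + \gamma P_3} + \frac{P_2}{P_2 - P_1} \cdot \frac{P_2}{P_2 + \gamma P_3}$. -/
open scoped ENNReal
open MeasureTheory ProbabilityTheory Real Set

lemma myExpMeasure_Iic {r : ℝ} (hr : 0 < r) (x : ℝ) :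
    expMeasure r (Iic x) = ENNReal.ofReal (if 0 ≤ x then 1 - rexp (-(r*x)) else 0) := by
  rw [expMeasure, gammaMeasure, withDensity_apply _ measurableSet_Iic]
  exact lintegral_exponentialPDF_eq_antiDeriv hr x

lemma myExp_tail {r : ℝ} (hr : 0 < r) (a : ℝ) :
    expMeasure r (Ioi a) = ENNReal.ofReal (rexp (-(r * max a 0))) := by
  have : IsProbabilityMeasure (expMeasure r) := isProbabilityMeasure_expMeasure hr
  rw [← compl_Iic, measure_compl measurableSet_Iic (measure_ne_top _ _), measure_univ,
    myExpMeasure_Iic hr]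
  rcases le_or_gt 0 a with h | h
  · rw [if_pos h, max_eq_left h]
    have h1 : rexp (-(r * a)) ≤ 1 := exp_le_one_iff.2 (by nlinarith)
    rw [← ENNReal.ofReal_one, ← ENNReal.ofReal_sub _ (by linarith)]
    norm_num
  · rw [if_neg (not_le.2 h), max_eq_right h.le]
    simp

lemma myLintegral_expMeasure {r : ℝ} (hr : 0 < r) {f : ℝ → ℝ≥0∞} (hf : Measurable f) :
    ∫⁻ x, f x ∂(expMeasure r)
      = ∫⁻ x in Ioi 0, ENNReal.ofReal (r * rexp (-(r * x))) * f x := by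
  have hpdf : Measurable (exponentialPDF r) :=
    (measurable_exponentialPDFReal r).ennreal_ofReal
  rw [show expMeasure r = volume.withDensity (exponentialPDF r) from rfl,
    lintegral_withDensity_eq_lintegral_mul _ hpdf hf,
    ]
  simp only [Pi.mul_apply]
  rw [← lintegral_add_compl (fun x => exponentialPDF r x * f x) measurableSet_Ioi]
  have h2 : ∫⁻ x in (Ioi (0:ℝ))ᶜ, exponentialPDF r x * f x = 0 := by
    rw [compl_Ioi, ← setLIntegral_congr Iio_ae_eq_Iic]
    rw [setLIntegral_congr_fun_ae measurableSet_Iio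
      (ae_of_all _ (fun x (hx : x < 0) => by rw [exponentialPDF_of_neg hx, zero_mul]))]
    simp
  rw [h2, add_zero]
  refine setLIntegral_congr_fun_ae measurableSet_Ioi (ae_of_all _ fun x hx => ?_)
  rw [exponentialPDF_of_nonneg (le_of_lt hx)]

lemma myInt_Ioi {c : ℝ} (hc : 0 < c) (u : ℝ) :
    ∫ x in Ioi u, rexp (-(c * x)) = rexp (-(c * u)) / c := by
  have h := MeasureTheory.integral_comp_mul_left_Ioi (fun x => rexp (-x)) u hc
  simp only [smul_eq_mul] at h
  rw [h, integral_exp_neg_Ioi]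
  rw [div_eq_inv_mul]

lemma myLint_Ioi {c : ℝ} (hc : 0 < c) (u k : ℝ) (hk : 0 ≤ k) :
    ∫⁻ x in Ioi u, ENNReal.ofReal (k * rexp (-(c * x)))
      = ENNReal.ofReal (k * (rexp (-(c * u)) / c)) := by
  rw [← ofReal_integral_eq_lintegral_ofReal]
  · rw [MeasureTheory.integral_const_mul, myInt_Ioi hc]
  · have : IntegrableOn (fun x : ℝ => rexp (-c * x)) (Ioi u) := exp_neg_integrableOn_Ioi u hc
    simpa only [neg_mul] using this.const_mul k
  · exact ae_of_all _ fun x => mul_nonneg hk (exp_pos _).le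

lemma myLint_Ioc {d k s : ℝ} (hd : d ≠ 0) (hk : 0 ≤ k) (hs : 0 ≤ s) :
    ∫⁻ x in Ioc 0 s, ENNReal.ofReal (k * rexp (d * x))
      = ENNReal.ofReal (k * ((rexp (d * s) - 1) / d)) := by
  rw [← ofReal_integral_eq_lintegral_ofReal]
  · congr 1
    rw [MeasureTheory.integral_const_mul, ← intervalIntegral.integral_of_le hs,
      intervalIntegral.integral_comp_mul_left (fun x => rexp x) hd]
    simp [integral_exp, smul_eq_mul, div_eq_inv_mul]
  · apply Continuous.integrableOn_Ioc
    exact continuous_const.mul (continuous_exp.comp (continuous_const.mul continuous_id))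
  · exact ae_of_all _ fun x => mul_nonneg hk (exp_pos _).le

lemma myInner_tail {a b : ℝ} (ha : 0 < a) (hb : 0 < b) (hab : a ≠ b) {s : ℝ} (hs : 0 ≤ s) :
    ((expMeasure a).prod (expMeasure b)) {q : ℝ × ℝ | s < q.1 + q.2}
      = ENNReal.ofReal ((b * rexp (-(a * s)) - a * rexp (-(b * s))) / (b - a)) := by
  have hba : b - a ≠ 0 := sub_ne_zero.2 (Ne.symm hab)
  have hSm : MeasurableSet {q : ℝ × ℝ | s < q.1 + q.2} :=
    measurableSet_lt measurable_const (measurable_fst.add measurable_snd)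
  haveI := isProbabilityMeasure_expMeasure hb
  haveI : SFinite (expMeasure b) := inferInstance
  rw [Measure.prod_apply hSm]
  have hslice : ∀ x : ℝ, Prod.mk x ⁻¹' {q : ℝ × ℝ | s < q.1 + q.2} = Ioi (s - x) := by
    intro x; ext y; simp [sub_lt_iff_lt_add']
  simp only [hslice, myExp_tail hb]
  rw [myLintegral_expMeasure ha]
  · have hsplit : Ioi (0:ℝ) = Ioc 0 s ∪ Ioi s := (Ioc_union_Ioi_eq_Ioi hs).symm
    rw [hsplit, lintegral_union measurableSet_Ioi Ioc_disjoint_Ioi_same]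
    have h1 : ∫⁻ x in Ioc 0 s,
        ENNReal.ofReal (a * rexp (-(a * x))) * ENNReal.ofReal (rexp (-(b * max (s - x) 0)))
        = ENNReal.ofReal ((a * rexp (-(b * s))) * ((rexp ((b - a) * s) - 1) / (b - a))) := by
      rw [setLIntegral_congr_fun_ae measurableSet_Ioc (ae_of_all _ fun x hx => ?_)]
      · exact myLint_Ioc hba (mul_nonneg ha.le (exp_pos _).le) hs
      · rw [max_eq_left (by linarith [hx.2] : (0:ℝ) ≤ s - x),
          ← ENNReal.ofReal_mul (by positivity)]
        congr 1
        rw [mul_assoc, ← exp_add, mul_assoc, ← exp_add]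
        ring_nf
    have h2 : ∫⁻ x in Ioi s,
        ENNReal.ofReal (a * rexp (-(a * x))) * ENNReal.ofReal (rexp (-(b * max (s - x) 0)))
        = ENNReal.ofReal (a * (rexp (-(a * s)) / a)) := by
      rw [setLIntegral_congr_fun_ae measurableSet_Ioi (ae_of_all _ fun x hx => ?_)]
      · exact myLint_Ioi ha s a ha.le
      · rw [max_eq_right (by linarith [show s < x from hx] : s - x ≤ (0:ℝ))]
        simp
    have hnn : 0 ≤ (rexp ((b - a) * s) - 1) / (b - a) := by
      rcases hba.lt_or_gt with h | h
      · have h1 : (b - a) * s ≤ 0 := by nlinarith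
        have h2 : rexp ((b - a) * s) ≤ 1 := exp_le_one_iff.2 h1
        exact div_nonneg_iff.2 (Or.inr ⟨by linarith, by linarith⟩)
      · have h1 : (0:ℝ) ≤ (b - a) * s := by nlinarith
        have h2 : 1 ≤ rexp ((b - a) * s) := one_le_exp h1
        exact div_nonneg (by linarith) (by linarith)
    rw [h1, h2, ← ENNReal.ofReal_add (mul_nonneg (by positivity) hnn) (by positivity)]
    congr 1
    have key : rexp ((b - a) * s) * rexp (-(b * s)) = rexp (-(a * s)) := by
      rw [← exp_add]; ring_nf
    field_simp
    rw [mul_comm s (b - a)]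
    nlinarith [key, exp_pos (-(a*s)), exp_pos (-(b*s))]
  · apply Measurable.ennreal_ofReal
    apply Continuous.measurable
    exact continuous_exp.comp ((continuous_const.mul ((continuous_const.sub continuous_id).max continuous_const)).neg)

/-- Two cooperating stations, one interferer, noiseless special case of Theorem 1. -/
theorem two_coop_one_interferer
    {Ω : Type*} [MeasureSpace Ω] [IsProbabilityMeasure (ℙ : Measure Ω)]
    (H : Fin 3 → Ω → ℝ) (P : Fin 3 → ℝ)
    (hP : ∀ n, 0 < P n) (hne : P 0 ≠ P 1)
    (hmeas : ∀ n, Measurable (H n))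
    (hlaw : ∀ n, Measure.map (H n) ℙ = expMeasure (1 / P n))
    (hindep : iIndepFun H ℙ)
    (γ : ℝ) (hγ : 0 < γ) :
    (ℙ {ω | γ * H 2 ω < H 0 ω + H 1 ω}).toReal =
      P 0 / (P 0 - P 1) * (P 0 / (P 0 + γ * P 2)) +
        P 1 / (P 1 - P 0) * (P 1 / (P 1 + γ * P 2)) := by
  have hP0 := hP 0; have hP1 := hP 1; have hP2 := hP 2
  set a : ℝ := 1 / P 0 with ha_def
  set b : ℝ := 1 / P 1 with hb_def
  set c : ℝ := 1 / P 2 with hc_def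
  have ha : 0 < a := by positivity
  have hb : 0 < b := by positivity
  have hc : 0 < c := by positivity
  have hab : a ≠ b := by
    intro h
    rw [ha_def, hb_def, div_eq_div_iff hP0.ne' hP1.ne', one_mul, one_mul] at h
    exact hne h.symm
  have hba : b - a ≠ 0 := sub_ne_zero.2 (Ne.symm hab)
  haveI iPa : IsProbabilityMeasure (expMeasure a) := isProbabilityMeasure_expMeasure ha
  haveI iPb : IsProbabilityMeasure (expMeasure b) := isProbabilityMeasure_expMeasure hb
  haveI iPc : IsProbabilityMeasure (expMeasure c) := isProbabilityMeasure_expMeasure hc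
  -- step 1 : rewrite probability via product measures
  have hmeas2 : Measurable fun ω => (H 2 ω, (H 0 ω, H 1 ω)) :=
    (hmeas 2).prodMk ((hmeas 0).prodMk (hmeas 1))
  have hS : MeasurableSet {p : ℝ × ℝ × ℝ | γ * p.1 < p.2.1 + p.2.2} :=
    measurableSet_lt (measurable_const.mul measurable_fst)
      ((measurable_fst.comp measurable_snd).add (measurable_snd.comp measurable_snd))
  have hmap01 : Measure.map (fun ω => (H 0 ω, H 1 ω)) ℙ = (expMeasure a).prod (expMeasure b) := by
    rw [← hlaw 0, ← hlaw 1]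
    exact (indepFun_iff_map_prod_eq_prod_map_map (hmeas 0).aemeasurable
      (hmeas 1).aemeasurable).1 (hindep.indepFun (by decide))
  have hmap : Measure.map (fun ω => (H 2 ω, (H 0 ω, H 1 ω))) ℙ
      = (expMeasure c).prod ((expMeasure a).prod (expMeasure b)) := by
    rw [(indepFun_iff_map_prod_eq_prod_map_map (hmeas 2).aemeasurable
        ((hmeas 0).prodMk (hmeas 1)).aemeasurable).1
        ((hindep.indepFun_prodMk hmeas 0 1 2 (by decide) (by decide)).symm),
      hlaw 2, hmap01]
  have hE : {ω | γ * H 2 ω < H 0 ω + H 1 ω}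
      = (fun ω => (H 2 ω, (H 0 ω, H 1 ω))) ⁻¹'
        {p : ℝ × ℝ × ℝ | γ * p.1 < p.2.1 + p.2.2} := rfl
  rw [hE, ← Measure.map_apply hmeas2 hS, hmap, Measure.prod_apply hS]
  have hf : Measurable fun t : ℝ =>
      ((expMeasure a).prod (expMeasure b)) (Prod.mk t ⁻¹' {p : ℝ × ℝ × ℝ | γ * p.1 < p.2.1 + p.2.2}) :=
    measurable_measure_prodMk_left hS
  rw [myLintegral_expMeasure hc hf]
  -- rewrite inner measure by its formula on Ioi 0
  have hform : ∀ t ∈ Ioi (0:ℝ),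
      ENNReal.ofReal (c * rexp (-(c * t))) *
        ((expMeasure a).prod (expMeasure b)) (Prod.mk t ⁻¹' {p : ℝ × ℝ × ℝ | γ * p.1 < p.2.1 + p.2.2})
      = ENNReal.ofReal ((c * b / (b - a)) * rexp (-(c + a * γ) * t)
          - (c * a / (b - a)) * rexp (-(c + b * γ) * t)) := by
    intro t ht
    have ht' : (0:ℝ) < t := ht
    have hst : (0:ℝ) ≤ γ * t := by positivity
    have hpre : Prod.mk t ⁻¹' {p : ℝ × ℝ × ℝ | γ * p.1 < p.2.1 + p.2.2}
        = {q : ℝ × ℝ | γ * t < q.1 + q.2} := rfl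
    rw [hpre, myInner_tail ha hb hab hst, ← ENNReal.ofReal_mul (by positivity)]
    congr 1
    have e1 : rexp (-(c + a * γ) * t) = rexp (-(c * t)) * rexp (-(a * (γ * t))) := by
      rw [← exp_add]; ring_nf
    have e2 : rexp (-(c + b * γ) * t) = rexp (-(c * t)) * rexp (-(b * (γ * t))) := by
      rw [← exp_add]; ring_nf
    rw [e1, e2]
    field_simp
  rw [setLIntegral_congr_fun_ae measurableSet_Ioi (ae_of_all _ hform)]
  -- convert to a real integral
  have hca : 0 < c + a * γ := by positivity
  have hcb : 0 < c + b * γ := by positivity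
  have hint1 : IntegrableOn (fun t : ℝ => (c * b / (b - a)) * rexp (-(c + a * γ) * t)) (Ioi 0) :=
    (exp_neg_integrableOn_Ioi 0 hca).const_mul _
  have hint2 : IntegrableOn (fun t : ℝ => (c * a / (b - a)) * rexp (-(c + b * γ) * t)) (Ioi 0) :=
    (exp_neg_integrableOn_Ioi 0 hcb).const_mul _
  have hnn : ∀ t ∈ Ioi (0:ℝ), 0 ≤ (c * b / (b - a)) * rexp (-(c + a * γ) * t)
      - (c * a / (b - a)) * rexp (-(c + b * γ) * t) := by
    intro t ht
    have ht' : (0:ℝ) < t := ht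
    have e1 : rexp (-(c + a * γ) * t) = rexp (-(c * t)) * rexp (-(a * (γ * t))) := by
      rw [← exp_add]; ring_nf
    have e2 : rexp (-(c + b * γ) * t) = rexp (-(c * t)) * rexp (-(b * (γ * t))) := by
      rw [← exp_add]; ring_nf
    rw [e1, e2]
    have hφ : 0 ≤ (b * rexp (-(a * (γ * t))) - a * rexp (-(b * (γ * t)))) / (b - a) := by
      rcases hba.lt_or_gt with h | h
      · have h1 : b * (γ * t) ≤ a * (γ * t) := by nlinarith [mul_pos hγ ht']
        have h2 : rexp (-(a * (γ * t))) ≤ rexp (-(b * (γ * t))) := exp_le_exp.2 (by linarith)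
        have h3 : b * rexp (-(a * (γ * t))) - a * rexp (-(b * (γ * t))) ≤ 0 := by
          nlinarith [exp_pos (-(a * (γ * t))), exp_pos (-(b * (γ * t)))]
        exact div_nonneg_iff.2 (Or.inr ⟨h3, by linarith⟩)
      · have h1 : a * (γ * t) ≤ b * (γ * t) := by nlinarith [mul_pos hγ ht']
        have h2 : rexp (-(b * (γ * t))) ≤ rexp (-(a * (γ * t))) := exp_le_exp.2 (by linarith)
        have h3 : 0 ≤ b * rexp (-(a * (γ * t))) - a * rexp (-(b * (γ * t))) := by
          nlinarith [exp_pos (-(a * (γ * t))), exp_pos (-(b * (γ * t)))]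
        exact div_nonneg h3 (by linarith)
    have key : c * rexp (-(c * t)) *
        ((b * rexp (-(a * (γ * t))) - a * rexp (-(b * (γ * t)))) / (b - a))
        = c * b / (b - a) * (rexp (-(c * t)) * rexp (-(a * (γ * t))))
          - c * a / (b - a) * (rexp (-(c * t)) * rexp (-(b * (γ * t)))) := by
      field_simp
    rw [← key]
    exact mul_nonneg (by positivity) hφ
  have hconv := ofReal_integral_eq_lintegral_ofReal (hint1.sub hint2)
    ((ae_restrict_iff' measurableSet_Ioi).2 (ae_of_all _ hnn))
  simp only [Pi.sub_apply] at hconv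
  rw [← hconv]
  rw [MeasureTheory.integral_sub hint1 hint2, MeasureTheory.integral_const_mul,
    MeasureTheory.integral_const_mul]
  simp only [neg_mul]
  rw [myInt_Ioi hca 0, myInt_Ioi hcb 0]
  have hV : c * b / (b - a) * (rexp (-((c + a * γ) * 0)) / (c + a * γ))
      - c * a / (b - a) * (rexp (-((c + b * γ) * 0)) / (c + b * γ))
      = c * (c + γ * (a + b)) / ((c + a * γ) * (c + b * γ)) := by
    simp only [mul_zero, neg_zero, exp_zero]
    field_simp
    ring
  rw [hV, ENNReal.toReal_ofReal (by positivity)]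
  rw [ha_def, hb_def, hc_def]
  have h01 : P 0 - P 1 ≠ 0 := sub_ne_zero.2 hne
  have h10 : P 1 - P 0 ≠ 0 := sub_ne_zero.2 (Ne.symm hne)
  have hd0 : P 0 + γ * P 2 ≠ 0 := by positivity
  have hd1 : P 1 + γ * P 2 ≠ 0 := by positivity
  field_simp
  ring
end

section
/- Let $P_1, \ldots, P_N$ be pairwise distinct positive reals and $x \geq 0$. Then the function $F(x) = 1 - \sum_{n=1}^N e^{-x/P_n} \prod_{j \neq n} \frac{P_n}{P_n - P_j}$ satisfies $0 \leq F(x) \leq 1$ for all $x \geq 0$, and $F$ is monotone nondecreasing. -/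
open Finset intervalIntegral

namespace HypoAux

variable {N : ℕ}

noncomputable def c (P : Fin N → ℝ) (s : Finset (Fin N)) (n : Fin N) : ℝ :=
  ∏ j ∈ s.erase n, P n / (P n - P j)

noncomputable def S (P : Fin N → ℝ) (s : Finset (Fin N)) (x : ℝ) : ℝ :=
  ∑ n ∈ s, Real.exp (-x / P n) * c P s n

lemma sub_ne (P : Fin N → ℝ) (hdist : Function.Injective P) {n m : Fin N} (h : n ≠ m) :
    P n - P m ≠ 0 := sub_ne_zero.mpr (fun he => h (hdist he))

lemma sum_c_eq_one (P : Fin N → ℝ) (hP : ∀ n, 0 < P n) (hdist : Function.Injective P)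
    {s : Finset (Fin N)} (hs : s.Nonempty) : ∑ n ∈ s, c P s n = 1 := by
  set v : Fin N → ℝ := fun n => (P n)⁻¹ with hv
  have hvinj : Set.InjOn v s := by
    intro a _ b _ hab
    exact hdist (inv_injective hab)
  have hdeg : (Polynomial.C (1:ℝ)).degree < (s.card : ℕ) := by
    calc (Polynomial.C (1:ℝ)).degree ≤ 0 := Polynomial.degree_C_le
      _ < (s.card : ℕ) := by exact_mod_cast Nat.cast_pos.mpr hs.card_pos
  have h := Lagrange.eq_interpolate (v := v) (s := s) (f := Polynomial.C (1:ℝ)) hvinj hdeg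
  have h0 := congrArg (Polynomial.eval (0:ℝ)) h
  rw [Polynomial.eval_C, Lagrange.interpolate_apply, Polynomial.eval_finset_sum] at h0
  have heval : ∀ n ∈ s, Polynomial.eval 0 (Polynomial.C (Polynomial.eval (v n) (Polynomial.C (1:ℝ))) *
      Lagrange.basis s v n) = c P s n := by
    intro n hn
    rw [Polynomial.eval_mul, Polynomial.eval_C, Polynomial.eval_C, one_mul,
      Lagrange.basis, Polynomial.eval_prod]
    refine Finset.prod_congr rfl fun j hj => ?_
    have hjn : j ≠ n := (Finset.mem_erase.mp hj).1
    have hPn := (hP n).ne'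
    have hPj := (hP j).ne'
    have hsub : P n - P j ≠ 0 := sub_ne P hdist (Ne.symm hjn)
    rw [Lagrange.basisDivisor, Polynomial.eval_mul, Polynomial.eval_C, Polynomial.eval_sub,
      Polynomial.eval_X, Polynomial.eval_C]
    simp only [hv, zero_sub]
    have hsub' : P j - P n ≠ 0 := sub_ne P hdist hjn
    rw [inv_sub_inv hPn hPj, inv_div]
    rw [div_mul_eq_mul_div, div_eq_div_iff hsub' hsub]
    field_simp
    ring
  rw [Finset.sum_congr rfl heval] at h0
  exact h0.symm

lemma hasDerivAt_S (P : Fin N → ℝ) (s : Finset (Fin N)) (x : ℝ) :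
    HasDerivAt (S P s) (∑ n ∈ s, (-(P n)⁻¹ * Real.exp (-x / P n)) * c P s n) x := by
  have h : ∀ n ∈ s, HasDerivAt (fun y => Real.exp (-y / P n) * c P s n)
      ((-(P n)⁻¹ * Real.exp (-x / P n)) * c P s n) x := by
    intro n _
    have h1 : HasDerivAt (fun y : ℝ => -y / P n) (-(P n)⁻¹) x := by
      simpa [neg_div] using ((hasDerivAt_id x).neg.div_const (P n))
    simpa [mul_comm] using h1.exp.mul_const (c P s n)
  exact (HasDerivAt.sum h).congr_of_eventuallyEq (Filter.Eventually.of_forall fun y => by simp [S, Finset.sum_apply])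

lemma c_insert (P : Fin N → ℝ) {s : Finset (Fin N)} {m n : Fin N} (hm : m ∉ s) (hn : n ∈ s) :
    c P (insert m s) n = (P n / (P n - P m)) * c P s n := by
  have hnm : n ≠ m := fun h => hm (h ▸ hn)
  rw [c, c, Finset.erase_insert_of_ne hnm.symm,
    Finset.prod_insert (fun h => hm (Finset.mem_of_mem_erase h))]

lemma c_insert_self (P : Fin N → ℝ) {s : Finset (Fin N)} {m : Fin N} (hm : m ∉ s) :
    c P (insert m s) m = c P s m := by
  rw [c, c, Finset.erase_insert hm]
  congr 1
  ext j
  simp [Finset.mem_erase]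
  intro hj; exact fun h => hm (h ▸ hj)

lemma deriv_formula (P : Fin N → ℝ) (hP : ∀ n, 0 < P n) (hdist : Function.Injective P)
    {s : Finset (Fin N)} {m : Fin N} (hm : m ∉ s) (x : ℝ) :
    ∑ n ∈ insert m s, (-(P n)⁻¹ * Real.exp (-x / P n)) * c P (insert m s) n
      = (P m)⁻¹ * (S P s x - S P (insert m s) x) := by
  rw [S, S, Finset.sum_insert hm, Finset.sum_insert hm]
  have key : ∀ n ∈ s, (-(P n)⁻¹ * Real.exp (-x / P n)) * c P (insert m s) n
      = (P m)⁻¹ * (Real.exp (-x / P n) * c P s n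
          - Real.exp (-x / P n) * c P (insert m s) n) := by
    intro n hn
    rw [c_insert P hm hn]
    have hPn := (hP n).ne'
    have hPm := (hP m).ne'
    have hsub : P n - P m ≠ 0 := sub_ne P hdist (fun h => hm (h ▸ hn))
    field_simp
    ring
  rw [Finset.sum_congr rfl key, ← Finset.mul_sum, Finset.sum_sub_distrib]
  ring

lemma continuous_S (P : Fin N → ℝ) (s : Finset (Fin N)) : Continuous (S P s) := by
  unfold S
  exact continuous_finset_sum _ fun n _ =>
    (((continuous_id.neg).div_const (P n)).rexp).mul continuous_const

lemma hasDerivAt_S_insert (P : Fin N → ℝ) (hP : ∀ n, 0 < P n) (hdist : Function.Injective P)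
    {s : Finset (Fin N)} {m : Fin N} (hm : m ∉ s) (x : ℝ) :
    HasDerivAt (S P (insert m s)) ((P m)⁻¹ * (S P s x - S P (insert m s) x)) x := by
  have h := hasDerivAt_S P (insert m s) x
  rwa [deriv_formula P hP hdist hm x] at h

lemma S_insert_eq (P : Fin N → ℝ) (hP : ∀ n, 0 < P n) (hdist : Function.Injective P)
    {s : Finset (Fin N)} {m : Fin N} (hm : m ∉ s) (x : ℝ) :
    S P (insert m s) x = Real.exp (-x / P m) *
      (1 + ∫ t in (0:ℝ)..x, (P m)⁻¹ * Real.exp (t / P m) * S P s t) := by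
  have hGd : ∀ t : ℝ, HasDerivAt (fun y => Real.exp (y / P m) * S P (insert m s) y)
      ((P m)⁻¹ * Real.exp (t / P m) * S P s t) t := by
    intro t
    have h1 : HasDerivAt (fun y : ℝ => Real.exp (y / P m)) ((P m)⁻¹ * Real.exp (t / P m)) t := by
      simpa [mul_comm] using ((hasDerivAt_id t).div_const (P m)).exp
    have h2 := hasDerivAt_S_insert P hP hdist hm t
    have h3 := h1.mul h2
    refine h3.congr_deriv ?_
    have hPm := (hP m).ne'
    ring
  have hint : IntervalIntegrable (fun t => (P m)⁻¹ * Real.exp (t / P m) * S P s t)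
      MeasureTheory.volume 0 x :=
    ((continuous_const.mul ((continuous_id.div_const (P m)).rexp)).mul
      (continuous_S P s)).intervalIntegrable 0 x
  have hftc := intervalIntegral.integral_eq_sub_of_hasDerivAt (fun t _ => hGd t) hint
  have hG0 : Real.exp ((0:ℝ) / P m) * S P (insert m s) 0 = 1 := by
    rw [zero_div, Real.exp_zero, one_mul, S]
    have h01 : ∀ n ∈ insert m s, Real.exp (-(0:ℝ) / P n) * c P (insert m s) n
        = c P (insert m s) n := by intro n _; simp
    rw [Finset.sum_congr rfl h01]
    exact sum_c_eq_one P hP hdist (Finset.insert_nonempty m s)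
  rw [hG0] at hftc
  have hexp := Real.exp_ne_zero (x / P m)
  set I := ∫ t in (0:ℝ)..x, (P m)⁻¹ * Real.exp (t / P m) * S P s t with hIdef
  have hx : S P (insert m s) x = (Real.exp (x / P m))⁻¹ * (1 + I) := by
    field_simp
    linarith [hftc]
  rw [hx, ← Real.exp_neg, neg_div]

lemma key (P : Fin N → ℝ) (hP : ∀ n, 0 < P n) (hdist : Function.Injective P)
    (s : Finset (Fin N)) :
    (∀ x : ℝ, 0 ≤ x → 0 ≤ S P s x ∧ S P s x ≤ 1) ∧
    (∀ x y : ℝ, 0 ≤ x → x ≤ y → S P s y ≤ S P s x) := by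
  induction s using Finset.induction_on with
  | empty => simp [S]
  | @insert m s hm ih =>
    obtain ⟨ihb, ihmono⟩ := ih
    have hPm := hP m
    have hexp_int : ∀ x : ℝ, (∫ t in (0:ℝ)..x, (P m)⁻¹ * Real.exp (t / P m))
        = Real.exp (x / P m) - 1 := by
      intro x
      have hd : ∀ t : ℝ, HasDerivAt (fun y : ℝ => Real.exp (y / P m))
          ((P m)⁻¹ * Real.exp (t / P m)) t := by
        intro t
        simpa [mul_comm] using ((hasDerivAt_id t).div_const (P m)).exp
      have := intervalIntegral.integral_eq_sub_of_hasDerivAt (fun t _ => hd t)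
        ((continuous_const.mul ((continuous_id.div_const (P m)).rexp)).intervalIntegrable 0 x)
      simpa [Real.exp_zero] using this
    have hcont : Continuous (fun t => (P m)⁻¹ * Real.exp (t / P m) * S P s t) :=
      (continuous_const.mul ((continuous_id.div_const (P m)).rexp)).mul (continuous_S P s)
    have hb : ∀ x : ℝ, 0 ≤ x → 0 ≤ S P (insert m s) x ∧ S P (insert m s) x ≤ 1 := by
      intro x hx
      rw [S_insert_eq P hP hdist hm x]
      constructor
      · have hI : 0 ≤ ∫ t in (0:ℝ)..x, (P m)⁻¹ * Real.exp (t / P m) * S P s t := by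
          apply intervalIntegral.integral_nonneg hx
          intro u hu
          have h0 := (ihb u hu.1).1
          positivity
        positivity
      · have hI : (∫ t in (0:ℝ)..x, (P m)⁻¹ * Real.exp (t / P m) * S P s t)
            ≤ Real.exp (x / P m) - 1 := by
          rw [← hexp_int x]
          apply intervalIntegral.integral_mono_on hx (hcont.intervalIntegrable 0 x)
            ((continuous_const.mul ((continuous_id.div_const (P m)).rexp)).intervalIntegrable 0 x)
          intro u hu
          have h1 := (ihb u hu.1).2
          have h2 : (0:ℝ) ≤ (P m)⁻¹ * Real.exp (u / P m) := by positivity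
          calc (P m)⁻¹ * Real.exp (u / P m) * S P s u
              ≤ (P m)⁻¹ * Real.exp (u / P m) * 1 := mul_le_mul_of_nonneg_left h1 h2
            _ = (P m)⁻¹ * Real.exp (u / P m) := mul_one _
        have heq : Real.exp (-x / P m) * (1 + (Real.exp (x / P m) - 1)) = 1 := by
          rw [neg_div, Real.exp_neg]
          field_simp
          ring
        calc Real.exp (-x / P m) * (1 + ∫ t in (0:ℝ)..x, (P m)⁻¹ * Real.exp (t / P m) * S P s t)
            ≤ Real.exp (-x / P m) * (1 + (Real.exp (x / P m) - 1)) :=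
              mul_le_mul_of_nonneg_left (by linarith) (Real.exp_nonneg _)
          _ = 1 := heq
    have hcomp : ∀ x : ℝ, 0 ≤ x → S P s x ≤ S P (insert m s) x := by
      intro x hx
      rw [S_insert_eq P hP hdist hm x]
      have hI : (Real.exp (x / P m) - 1) * S P s x
          ≤ ∫ t in (0:ℝ)..x, (P m)⁻¹ * Real.exp (t / P m) * S P s t := by
        have heq : (Real.exp (x / P m) - 1) * S P s x
            = ∫ t in (0:ℝ)..x, ((P m)⁻¹ * Real.exp (t / P m)) * S P s x := by
          rw [intervalIntegral.integral_mul_const, hexp_int x]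
        rw [heq]
        apply intervalIntegral.integral_mono_on hx
          (((continuous_const.mul ((continuous_id.div_const (P m)).rexp)).mul
            continuous_const).intervalIntegrable 0 x)
          (hcont.intervalIntegrable 0 x)
        intro u hu
        have h1 : S P s x ≤ S P s u := ihmono u x hu.1 hu.2
        have h2 : (0:ℝ) ≤ (P m)⁻¹ * Real.exp (u / P m) := by positivity
        exact mul_le_mul_of_nonneg_left h1 h2
      have ha : (0:ℝ) < Real.exp (-x / P m) := Real.exp_pos _
      have hab : Real.exp (-x / P m) * Real.exp (x / P m) = 1 := by
        rw [← Real.exp_add]; ring_nf; exact Real.exp_zero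
      have hS1 : S P s x ≤ 1 := (ihb x hx).2
      nlinarith [mul_le_mul_of_nonneg_left hI ha.le]
    have hanti : AntitoneOn (S P (insert m s)) (Set.Ici (0:ℝ)) := by
      apply antitoneOn_of_deriv_nonpos (convex_Ici 0)
        ((continuous_S P (insert m s)).continuousOn)
      · intro t _
        exact (hasDerivAt_S_insert P hP hdist hm t).differentiableAt.differentiableWithinAt
      · intro t ht
        rw [interior_Ici] at ht
        rw [(hasDerivAt_S_insert P hP hdist hm t).deriv]
        have := hcomp t (le_of_lt ht)
        have hpm : (0:ℝ) < (P m)⁻¹ := by positivity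
        nlinarith
    exact ⟨hb, fun x y hx hxy => hanti (Set.mem_Ici.mpr hx) (Set.mem_Ici.mpr (hx.trans hxy)) hxy⟩

end HypoAux

open Finset

/-- The hypoexponential CDF `F(x) = 1 - ∑ n, e^{-x/Pₙ} ∏_{j ≠ n} Pₙ/(Pₙ - Pⱼ)` lies in
`[0,1]` on `[0, ∞)` and is monotone nondecreasing there. -/
theorem hypoexponential_cdf_bounds_mono
    {N : ℕ} (P : Fin N → ℝ) (hP : ∀ n, 0 < P n) (hdist : Function.Injective P) :
    (∀ x : ℝ, 0 ≤ x →
        0 ≤ 1 - ∑ n, Real.exp (-x / P n) * ∏ j ∈ Finset.univ.erase n, P n / (P n - P j) ∧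
        1 - ∑ n, Real.exp (-x / P n) * ∏ j ∈ Finset.univ.erase n, P n / (P n - P j) ≤ 1) ∧
    (∀ x y : ℝ, 0 ≤ x → x ≤ y →
        1 - ∑ n, Real.exp (-x / P n) * ∏ j ∈ Finset.univ.erase n, P n / (P n - P j) ≤
        1 - ∑ n, Real.exp (-y / P n) * ∏ j ∈ Finset.univ.erase n, P n / (P n - P j)) := by
  obtain ⟨hb, hmono⟩ := HypoAux.key P hP hdist Finset.univ
  have hS : ∀ x : ℝ, HypoAux.S P Finset.univ x
      = ∑ n, Real.exp (-x / P n) * ∏ j ∈ Finset.univ.erase n, P n / (P n - P j) := by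
    intro x; rfl
  constructor
  · intro x hx
    have := hb x hx
    rw [hS x] at this
    constructor <;> linarith [this.1, this.2]
  · intro x y hx hxy
    have := hmono x y hx hxy
    rw [hS x, hS y] at this
    linarith
end

section
/- Let $H_1, \ldots, H_N$ be independent exponential random variables with pairwise distinct positive means and $\mathcal{K}$ a disjoint set of independent exponentials with positive means. For fixed $\gamma_{th} > 0$ and $\sigma_z^2 \geq 0$, the success probability $\sum_{n \in \mathcal{N}} e^{-\gamma_{th}\sigma_z^2/P_n} \prod_{j \neq n} \frac{P_n}{P_n - P_j} \prod_{k \in \mathcal{K}} \frac{P_n}{P_k\gamma_{th} + P_n}$ lies in the interval $[0, 1]$. -/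
open Finset Real MeasureTheory Set

lemma lagrange_sum_eval_zero {ι : Type*} [DecidableEq ι] (s : Finset ι) (x : ι → ℝ)
    (hs : s.Nonempty) (hinj : Set.InjOn x s) :
    ∑ i ∈ s, ∏ j ∈ s.erase i, x j / (x j - x i) = 1 := by
  have h := congrArg (Polynomial.eval (0:ℝ)) (Lagrange.sum_basis hinj hs)
  simp only [Polynomial.eval_finset_sum, Polynomial.eval_one] at h
  rw [← h]
  refine Finset.sum_congr rfl fun i hi => ?_
  rw [Lagrange.basis, Polynomial.eval_prod]
  refine Finset.prod_congr rfl fun j hj => ?_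
  rw [Lagrange.basisDivisor]
  simp only [Polynomial.eval_mul, Polynomial.eval_C, Polynomial.eval_sub, Polynomial.eval_X]
  rw [show x j - x i = -(x i - x j) by ring, div_neg, div_eq_mul_inv]
  ring

lemma integral_exp_mul_eq {c : ℝ} (hc : c ≠ 0) (t : ℝ) :
    ∫ v in (0:ℝ)..t, Real.exp (c * v) = (Real.exp (c * t) - 1) / c := by
  rw [intervalIntegral.integral_comp_mul_left Real.exp hc, integral_exp]
  simp only [mul_zero, Real.exp_zero, smul_eq_mul]
  ring

lemma hypoexp_bound {ι : Type*} [DecidableEq ι] (x : ι → ℝ) (s : Finset ι) :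
    (∀ i ∈ s, 0 < x i) → Set.InjOn x s → ∀ t : ℝ, 0 ≤ t →
      0 ≤ ∑ i ∈ s, (∏ j ∈ s.erase i, x j / (x j - x i)) * Real.exp (-(x i * t)) ∧
      ∑ i ∈ s, (∏ j ∈ s.erase i, x j / (x j - x i)) * Real.exp (-(x i * t)) ≤ 1 := by
  induction s using Finset.induction_on with
  | empty => intro _ _ t ht; simp
  | @insert a s ha ih =>
    intro hpos hinj t ht
    have hxa : 0 < x a := hpos a (mem_insert_self a s)
    have hpos' : ∀ i ∈ s, 0 < x i := fun i hi => hpos i (mem_insert_of_mem hi)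
    have hinj' : Set.InjOn x s := hinj.mono (fun y hy => mem_insert_of_mem hy)
    have hne : ∀ i ∈ s, x i ≠ x a := by
      intro i hi h
      exact ha ((hinj (mem_insert_of_mem hi) (mem_insert_self a s) h) ▸ hi)
    have hstruct : ∀ f : ι → ℝ,
        ∑ i ∈ insert a s, (∏ j ∈ (insert a s).erase i, x j / (x j - x i)) * f i
          = (∏ j ∈ s, x j / (x j - x a)) * f a
            + ∑ i ∈ s, (x a / (x a - x i) * ∏ j ∈ s.erase i, x j / (x j - x i)) * f i := by
      intro f
      rw [Finset.sum_insert ha, Finset.erase_insert ha]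
      congr 1
      refine Finset.sum_congr rfl fun i hi => ?_
      have hai : a ≠ i := fun h => ha (h ▸ hi)
      rw [Finset.erase_insert_of_ne hai,
        Finset.prod_insert (fun h => ha (Finset.mem_of_mem_erase h))]
    have hLag : (∏ j ∈ s, x j / (x j - x a))
        + ∑ i ∈ s, (x a / (x a - x i) * ∏ j ∈ s.erase i, x j / (x j - x i)) = 1 := by
      have h1 := lagrange_sum_eval_zero (insert a s) x ⟨a, mem_insert_self a s⟩ hinj
      have h2 := hstruct (fun _ => 1)
      simp only [mul_one] at h2
      rw [h2] at h1
      exact h1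
    have key : ∑ i ∈ insert a s, (∏ j ∈ (insert a s).erase i, x j / (x j - x i))
          * Real.exp (-(x i * t))
        = Real.exp (-(x a * t)) + ∫ v in (0:ℝ)..t, x a * Real.exp (-(x a * v))
            * ∑ i ∈ s, (∏ j ∈ s.erase i, x j / (x j - x i)) * Real.exp (-(x i * (t - v))) := by
      rw [hstruct (fun i => Real.exp (-(x i * t)))]
      have hint : (∫ v in (0:ℝ)..t, x a * Real.exp (-(x a * v))
            * ∑ i ∈ s, (∏ j ∈ s.erase i, x j / (x j - x i)) * Real.exp (-(x i * (t - v))))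
          = ∑ i ∈ s, (x a * ((∏ j ∈ s.erase i, x j / (x j - x i)) * Real.exp (-(x i * t))))
              * ((Real.exp ((x i - x a) * t) - 1) / (x i - x a)) := by
        rw [show (fun v => x a * Real.exp (-(x a * v))
              * ∑ i ∈ s, (∏ j ∈ s.erase i, x j / (x j - x i)) * Real.exp (-(x i * (t - v))))
            = fun v => ∑ i ∈ s, (x a * ((∏ j ∈ s.erase i, x j / (x j - x i))
                * Real.exp (-(x i * t)))) * Real.exp ((x i - x a) * v) from funext fun v => by
          rw [Finset.mul_sum]
          refine Finset.sum_congr rfl fun i hi => ?_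
          have e1 : Real.exp (-(x a * v)) * Real.exp (-(x i * (t - v)))
              = Real.exp (-(x i * t)) * Real.exp ((x i - x a) * v) := by
            rw [← Real.exp_add, ← Real.exp_add]; ring_nf
          linear_combination (x a * ∏ j ∈ s.erase i, x j / (x j - x i)) * e1]
        rw [intervalIntegral.integral_finset_sum (fun i hi =>
          (Continuous.intervalIntegrable (by fun_prop) _ _))]
        refine Finset.sum_congr rfl fun i hi => ?_
        rw [intervalIntegral.integral_const_mul,
          integral_exp_mul_eq (sub_ne_zero.mpr (hne i hi)) t]
      rw [hint]
      have hsum1 : ∑ i ∈ s, (x a * ((∏ j ∈ s.erase i, x j / (x j - x i))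
            * Real.exp (-(x i * t)))) * ((Real.exp ((x i - x a) * t) - 1) / (x i - x a))
          = ∑ i ∈ s, ((x a / (x a - x i) * ∏ j ∈ s.erase i, x j / (x j - x i))
              * Real.exp (-(x i * t))
            - (x a / (x a - x i) * ∏ j ∈ s.erase i, x j / (x j - x i))
              * Real.exp (-(x a * t))) := by
        refine Finset.sum_congr rfl fun i hi => ?_
        have hd : x i - x a ≠ 0 := sub_ne_zero.mpr (hne i hi)
        have e1 : Real.exp (-(x i * t)) * Real.exp ((x i - x a) * t)
            = Real.exp (-(x a * t)) := by
          rw [← Real.exp_add]; ring_nf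
        rw [show x a - x i = -(x i - x a) by ring, div_neg]
        linear_combination (x a * (∏ j ∈ s.erase i, x j / (x j - x i)) / (x i - x a)) * e1
      rw [hsum1, Finset.sum_sub_distrib, ← Finset.sum_mul]
      linear_combination Real.exp (-(x a * t)) * hLag
    rw [key]
    have hIcc : ∀ u ∈ Set.Icc (0:ℝ) t, 0 ≤ t - u := fun u hu => by linarith [hu.2]
    constructor
    · refine add_nonneg (Real.exp_nonneg _) (intervalIntegral.integral_nonneg ht fun u hu => ?_)
      exact mul_nonneg (mul_nonneg hxa.le (Real.exp_nonneg _))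
        ((ih hpos' hinj' (t - u) (hIcc u hu)).1)
    · have hint1 : IntervalIntegrable (fun v => x a * Real.exp (-(x a * v))
          * ∑ i ∈ s, (∏ j ∈ s.erase i, x j / (x j - x i)) * Real.exp (-(x i * (t - v))))
          volume 0 t := (Continuous.intervalIntegrable (by fun_prop) _ _)
      have hint2 : IntervalIntegrable (fun v => x a * Real.exp (-(x a * v))) volume 0 t :=
        (Continuous.intervalIntegrable (by fun_prop) _ _)
      have hmono := intervalIntegral.integral_mono_on ht hint1 hint2 (fun u hu => by
        have h2 := (ih hpos' hinj' (t - u) (hIcc u hu)).2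
        have h0 : 0 ≤ x a * Real.exp (-(x a * u)) :=
          mul_nonneg hxa.le (Real.exp_nonneg _)
        exact mul_le_of_le_one_right h0 h2)
      have hval : (∫ v in (0:ℝ)..t, x a * Real.exp (-(x a * v)))
          = 1 - Real.exp (-(x a * t)) := by
        rw [intervalIntegral.integral_const_mul]
        simp only [← neg_mul]
        rw [integral_exp_mul_eq (neg_ne_zero.mpr hxa.ne') t]
        field_simp [hxa.ne']
        ring
      nlinarith [hmono, hval]

lemma full_bound {ι : Type*} [DecidableEq ι] (x : ι → ℝ) (s : Finset ι)
    (hpos : ∀ i ∈ s, 0 < x i) (hinj : Set.InjOn x s) :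
    ∀ (m : ℕ) (a : Fin m → ℝ), (∀ k, 0 < a k) → ∀ t : ℝ, 0 ≤ t →
      0 ≤ (∑ i ∈ s, (∏ j ∈ s.erase i, x j / (x j - x i)) * Real.exp (-(x i * t))
            * ∏ k, (1 + a k * x i)⁻¹) ∧
      (∑ i ∈ s, (∏ j ∈ s.erase i, x j / (x j - x i)) * Real.exp (-(x i * t))
            * ∏ k, (1 + a k * x i)⁻¹) ≤ 1 := by
  intro m
  induction m with
  | zero =>
    intro a _ t ht
    simpa using hypoexp_bound x s hpos hinj t ht
  | succ m ihm =>
    intro a ha t ht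
    have ha' : ∀ k : Fin m, 0 < a k.succ := fun k => ha k.succ
    have hb : ∀ i ∈ s, (0:ℝ) < 1 + a 0 * x i := fun i hi => by
      have := mul_pos (ha 0) (hpos i hi); linarith
    have hfeq : (fun u : ℝ => Real.exp (-u) * ∑ i ∈ s,
          (∏ j ∈ s.erase i, x j / (x j - x i)) * Real.exp (-(x i * (t + a 0 * u)))
            * ∏ k : Fin m, (1 + a k.succ * x i)⁻¹)
        = fun u : ℝ => ∑ i ∈ s, ((∏ j ∈ s.erase i, x j / (x j - x i))
            * Real.exp (-(x i * t)) * ∏ k : Fin m, (1 + a k.succ * x i)⁻¹)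
            * Real.exp (-((1 + a 0 * x i) * u)) := by
      funext u
      rw [Finset.mul_sum]
      refine Finset.sum_congr rfl fun i hi => ?_
      have e1 : Real.exp (-u) * Real.exp (-(x i * (t + a 0 * u)))
          = Real.exp (-(x i * t)) * Real.exp (-((1 + a 0 * x i) * u)) := by
        rw [← Real.exp_add, ← Real.exp_add]; ring_nf
      linear_combination ((∏ j ∈ s.erase i, x j / (x j - x i))
        * ∏ k : Fin m, (1 + a k.succ * x i)⁻¹) * e1
    have hterm : ∀ i ∈ s, Integrable (fun u : ℝ => ((∏ j ∈ s.erase i, x j / (x j - x i))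
          * Real.exp (-(x i * t)) * ∏ k : Fin m, (1 + a k.succ * x i)⁻¹)
          * Real.exp (-((1 + a 0 * x i) * u))) (volume.restrict (Ioi 0)) := by
      intro i hi
      have h1 : IntegrableOn (fun u : ℝ => Real.exp (-(1 + a 0 * x i) * u)) (Ioi 0) :=
        exp_neg_integrableOn_Ioi 0 (hb i hi)
      simp only [neg_mul] at h1
      exact h1.const_mul _
    have key : (∫ u in Ioi (0:ℝ), Real.exp (-u) * ∑ i ∈ s,
          (∏ j ∈ s.erase i, x j / (x j - x i)) * Real.exp (-(x i * (t + a 0 * u)))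
            * ∏ k : Fin m, (1 + a k.succ * x i)⁻¹)
        = ∑ i ∈ s, (∏ j ∈ s.erase i, x j / (x j - x i)) * Real.exp (-(x i * t))
            * ∏ k : Fin (m + 1), (1 + a k * x i)⁻¹ := by
      rw [hfeq, MeasureTheory.integral_finset_sum s hterm]
      refine Finset.sum_congr rfl fun i hi => ?_
      rw [MeasureTheory.integral_const_mul]
      have hI : (∫ u in Ioi (0:ℝ), Real.exp (-((1 + a 0 * x i) * u)))
          = (1 + a 0 * x i)⁻¹ := by
        have h := integral_comp_mul_left_Ioi (fun y => Real.exp (-y)) 0 (hb i hi)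
        simp only [mul_zero, integral_exp_neg_Ioi, neg_zero, Real.exp_zero,
          smul_eq_mul, mul_one] at h
        exact h
      rw [hI, Fin.prod_univ_succ]
      ring
    rw [← key]
    have hup : ∀ u : ℝ, u ∈ Ioi (0:ℝ) → Real.exp (-u) * ∑ i ∈ s,
          (∏ j ∈ s.erase i, x j / (x j - x i)) * Real.exp (-(x i * (t + a 0 * u)))
            * ∏ k : Fin m, (1 + a k.succ * x i)⁻¹ ≤ Real.exp (-u) := fun u hu =>
      mul_le_of_le_one_right (Real.exp_nonneg _)
        ((ihm (fun k => a k.succ) ha' (t + a 0 * u)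
          (add_nonneg ht (mul_nonneg (ha 0).le (le_of_lt hu)))).2)
    constructor
    · refine setIntegral_nonneg measurableSet_Ioi fun u hu => ?_
      exact mul_nonneg (Real.exp_nonneg _)
        ((ihm (fun k => a k.succ) ha' (t + a 0 * u)
          (add_nonneg ht (mul_nonneg (ha 0).le (le_of_lt hu)))).1)
    · have hfint : IntegrableOn (fun u : ℝ => Real.exp (-u) * ∑ i ∈ s,
          (∏ j ∈ s.erase i, x j / (x j - x i)) * Real.exp (-(x i * (t + a 0 * u)))
            * ∏ k : Fin m, (1 + a k.succ * x i)⁻¹) (Ioi 0) := by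
        rw [IntegrableOn, hfeq]
        exact integrable_finset_sum s hterm
      have hgint : IntegrableOn (fun u : ℝ => Real.exp (-u)) (Ioi 0) := by
        have := exp_neg_integrableOn_Ioi (0:ℝ) (one_pos)
        simpa using this
      have hm := setIntegral_mono_on hfint hgint measurableSet_Ioi hup
      rw [integral_exp_neg_Ioi_zero] at hm
      exact hm


/-- The closed-form success probability of Theorem 1 lies in `[0, 1]`. -/
theorem success_probability_in_unit_interval
    {N m : ℕ} (hN : 1 ≤ N) (P : Fin N → ℝ) (Q : Fin m → ℝ)
    (hP : ∀ n, 0 < P n) (hdist : Function.Injective P) (hQ : ∀ k, 0 < Q k)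
    (γth σz2 : ℝ) (hγ : 0 < γth) (hσ : 0 ≤ σz2) :
    0 ≤ ∑ n, Real.exp (-γth * σz2 / P n) *
          (∏ j ∈ Finset.univ.erase n, P n / (P n - P j)) *
          (∏ k, P n / (Q k * γth + P n)) ∧
      ∑ n, Real.exp (-γth * σz2 / P n) *
          (∏ j ∈ Finset.univ.erase n, P n / (P n - P j)) *
          (∏ k, P n / (Q k * γth + P n)) ≤ 1 := by
  have hxpos : ∀ n ∈ (Finset.univ : Finset (Fin N)), (0:ℝ) < (P n)⁻¹ :=
    fun n _ => inv_pos.mpr (hP n)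
  have hinj : Set.InjOn (fun n => (P n)⁻¹) (Finset.univ : Finset (Fin N)) :=
    fun n _ k _ h => hdist (inv_injective h)
  have ha : ∀ k : Fin m, 0 < γth * Q k := fun k => mul_pos hγ (hQ k)
  have ht : 0 ≤ γth * σz2 := mul_nonneg hγ.le hσ
  have main := full_bound (fun n => (P n)⁻¹) Finset.univ hxpos hinj m
    (fun k => γth * Q k) ha (γth * σz2) ht
  have heq : ∑ n, Real.exp (-γth * σz2 / P n) *
        (∏ j ∈ Finset.univ.erase n, P n / (P n - P j)) *
        (∏ k, P n / (Q k * γth + P n))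
      = ∑ n, (∏ j ∈ Finset.univ.erase n, (P j)⁻¹ / ((P j)⁻¹ - (P n)⁻¹))
          * Real.exp (-((P n)⁻¹ * (γth * σz2)))
          * ∏ k, (1 + γth * Q k * (P n)⁻¹)⁻¹ := by
    refine Finset.sum_congr rfl fun n _ => ?_
    have e1 : Real.exp (-γth * σz2 / P n) = Real.exp (-((P n)⁻¹ * (γth * σz2))) := by
      congr 1; ring
    have e2 : (∏ j ∈ Finset.univ.erase n, P n / (P n - P j))
        = ∏ j ∈ Finset.univ.erase n, (P j)⁻¹ / ((P j)⁻¹ - (P n)⁻¹) := by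
      refine Finset.prod_congr rfl fun j hj => ?_
      have hjn : j ≠ n := (Finset.mem_erase.mp hj).1
      have hsub : P n - P j ≠ 0 := sub_ne_zero.mpr fun h => hjn (hdist h).symm
      have hsub' : (P j)⁻¹ - (P n)⁻¹ ≠ 0 :=
        sub_ne_zero.mpr fun h => hjn (hdist (inv_injective h))
      rw [div_eq_div_iff hsub hsub']
      field_simp [(hP n).ne', (hP j).ne']
    have e3 : (∏ k, P n / (Q k * γth + P n))
        = ∏ k, (1 + γth * Q k * (P n)⁻¹)⁻¹ := by
      refine Finset.prod_congr rfl fun k _ => ?_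
      have h1 : (1 + γth * Q k * (P n)⁻¹) = (Q k * γth + P n) / P n := by
        field_simp [(hP n).ne']
        ring
      rw [h1, inv_div]
    rw [e1, e2, e3]
    ring
  rw [heq]
  exact main
end
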